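/- The composite Hodge dual of the k-th power of the solder form is ⋆̄(θ^k) = (k!/(m−k)!) θ^{m−k}. -/

import Mathlib

open TensorProduct ExteriorAlgebra

noncomputable section

/-- Wedge product of a finite family of vectors, as an element of the exterior algebra. -/
def wedgeL {M : Type} [AddCommGroup M] [Module ℝ M] {n : ℕ} (v : Fin n → M) :
    ExteriorAlgebra ℝ M :=
  (List.ofFn fun i => ι ℝ (v i)).prod

/-- The bigraded algebra `Λ V* ⊗ Λ ℝ^m` of vector-valued forms, with `U` playing the
role of `V*` and `Fin m → ℝ` the role of `W = ℝ^m`. -/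
abbrev Omega (U : Type) [AddCommGroup U] [Module ℝ U] (m : ℕ) : Type :=
  ExteriorAlgebra ℝ U ⊗[ℝ] ExteriorAlgebra ℝ (Fin m → ℝ)

/-- The subspace of bidegree `(k, h)` elements: `Λ^k U ⊗ Λ^h ℝ^m`. -/
def bideg (U : Type) [AddCommGroup U] [Module ℝ U] (m k h : ℕ) :
    Submodule ℝ (Omega U m) :=
  Submodule.map₂ (TensorProduct.mk ℝ _ _) (⋀[ℝ]^k U) (⋀[ℝ]^h (Fin m → ℝ))

/-- The solder element `θ = Σ_a θ^a ⊗ T_a`, where `T_a` is the standard basis of `ℝ^m`. -/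
def solder {U : Type} [AddCommGroup U] [Module ℝ U] {m : ℕ} (u : Fin m → U) : Omega U m :=
  ∑ a, ι ℝ (u a) ⊗ₜ[ℝ] ι ℝ (Pi.single a 1)

/-- The composite volume element `ν = ν_g ⊗ n_h` (wedge of the dual orthonormal basis
tensor the wedge of the standard basis). -/
def vol {U : Type} [AddCommGroup U] [Module ℝ U] {m : ℕ} (u : Fin m → U) : Omega U m :=
  wedgeL u ⊗ₜ[ℝ] wedgeL (fun a : Fin m => Pi.single a (1 : ℝ))

set_option maxHeartbeats 1000000
set_option synthInstance.maxHeartbeats 400000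

namespace Stmt7Aux

variable {M : Type} [AddCommGroup M] [Module ℝ M]

lemma wedgeL_eq {n : ℕ} (v : Fin n → M) : wedgeL v = ιMulti ℝ n v :=
  (ExteriorAlgebra.ιMulti_apply v).symm

lemma comp_append {m k n : ℕ} (u : Fin m → M) (f : Fin k → Fin m) (h : Fin n → Fin m) :
    u ∘ Fin.append f h = Fin.append (u ∘ f) (u ∘ h) := by
  funext i
  induction i using Fin.addCases with
  | left i => simp [Fin.append_left]
  | right i => simp [Fin.append_right]

lemma wedgeL_mul {p q : ℕ} (v : Fin p → M) (w : Fin q → M) :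
    wedgeL v * wedgeL w = wedgeL (Fin.append v w) := by
  unfold wedgeL
  rw [List.ofFn_add, List.prod_append]
  simp [Fin.append_left, Fin.append_right]

lemma wedgeL_cast {p q : ℕ} (h : q = p) (v : Fin p → M) :
    wedgeL (v ∘ Fin.cast h) = wedgeL v := by
  subst h; rfl

lemma wedgeL_perm {n : ℕ} (v : Fin n → M) (π : Equiv.Perm (Fin n)) :
    wedgeL (v ∘ π) = ((Equiv.Perm.sign π : ℤ) : ℝ) • wedgeL v := by
  rw [wedgeL_eq, wedgeL_eq, AlternatingMap.map_perm, Units.smul_def,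
    ← Int.cast_smul_eq_zsmul ℝ]

lemma wedgeL_not_inj {n : ℕ} {v : Fin n → M} (hv : ¬ Function.Injective v) :
    wedgeL v = 0 := by
  rw [wedgeL_eq]
  exact AlternatingMap.map_eq_zero_of_not_injective _ _ hv

lemma cons_eq {n : ℕ} (x : M) (v : Fin n → M) :
    ι ℝ x * wedgeL v = wedgeL (Fin.cons x v) := by
  unfold wedgeL
  rw [List.ofFn_succ]
  simp [Fin.cons_zero, Fin.cons_succ]

lemma ιMulti_eq_det_smul {m : ℕ} (u : Module.Basis (Fin m) ℝ M) (v : Fin m → M) :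
    ιMulti ℝ m v = u.det v • ιMulti ℝ m ⇑u := by
  have h := Module.Basis.ext_alternating (f := ιMulti ℝ m)
    (g := (LinearMap.toSpanSingleton ℝ _ (ιMulti ℝ m ⇑u)).compAlternatingMap u.det) u ?_
  · exact DFunLike.congr_fun h v
  · intro w hw
    have hwb : Function.Bijective w := Finite.injective_iff_bijective.mp hw
    set π := Equiv.ofBijective w hwb with hπ
    have hcomp : (fun i => u (w i)) = ⇑u ∘ ⇑π := rfl
    rw [hcomp, AlternatingMap.map_perm]
    simp only [LinearMap.compAlternatingMap_apply, AlternatingMap.map_perm,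
      Module.Basis.det_self, LinearMap.toSpanSingleton_apply]
    rw [one_smul]

/-- determinant of the "column selection" matrix of `j`. -/
def cJ (m : ℕ) (j : Fin m → Fin m) : ℝ :=
  Matrix.det (Matrix.of fun i i' : Fin m => if j i' = i then (1 : ℝ) else 0)

lemma wedgeL_comp_basis {m : ℕ} (x : Module.Basis (Fin m) ℝ M) (j : Fin m → Fin m) :
    wedgeL (⇑x ∘ j) = cJ m j • wedgeL ⇑x := by
  rw [wedgeL_eq, wedgeL_eq, ιMulti_eq_det_smul x (⇑x ∘ j)]
  congr 1
  rw [Module.Basis.det_apply, cJ]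
  congr 1
  ext i i'
  rw [Module.Basis.toMatrix_apply]
  simp [Module.Basis.repr_self, Finsupp.single_apply]

lemma cJ_not_inj {m : ℕ} {j : Fin m → Fin m} (h : ¬ Function.Injective j) : cJ m j = 0 := by
  rw [Function.not_injective_iff] at h
  obtain ⟨a, b, hab, hne⟩ := h
  exact Matrix.det_zero_of_column_eq hne (fun i => by simp [hab])

lemma cJ_bij {m : ℕ} {j : Fin m → Fin m} (h : Function.Bijective j) :
    cJ m j = ((Equiv.Perm.sign (Equiv.ofBijective j h)⁻¹ : ℤ) : ℝ) := by
  set π := Equiv.ofBijective j h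
  have : (Matrix.of fun i i' : Fin m => if j i' = i then (1 : ℝ) else 0) =
      Equiv.Perm.permMatrix ℝ π⁻¹ := by
    ext i i'
    have : j i' = π i' := rfl
    simp only [Matrix.of_apply, Equiv.Perm.permMatrix, PEquiv.toMatrix_apply,
      Equiv.toPEquiv_apply, Option.mem_def, Option.some.injEq]
    rw [this]
    by_cases hh : π i' = i
    · have h2 : π⁻¹ i = i' := by rw [← hh, Equiv.Perm.inv_def, Equiv.symm_apply_apply]
      simp [hh, h2]
    · have : ¬ π⁻¹ i = i' := fun hc => hh (by rw [← hc, Equiv.Perm.inv_def, Equiv.apply_symm_apply])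
      simp [hh, show ¬π.symm i = i' by rwa [Equiv.Perm.inv_def] at this]
  rw [cJ, this, Matrix.det_permutation]

lemma cJ_sq {m : ℕ} {j : Fin m → Fin m} (h : Function.Bijective j) :
    cJ m j * cJ m j = 1 := by
  rw [cJ_bij h, ← Int.cast_mul, ← Units.val_mul]
  simp [Int.units_mul_self]

lemma cJ_ne_zero {m : ℕ} {j : Fin m → Fin m} (h : Function.Bijective j) : cJ m j ≠ 0 :=
  fun hc => by simpa [hc] using cJ_sq h

/-- The top-degree "coefficient of the volume" functional. -/
def Dz {m : ℕ} (x : Module.Basis (Fin m) ℝ M) : ExteriorAlgebra ℝ M →ₗ[ℝ] ℝ :=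
  ExteriorAlgebra.liftAlternating
    (fun i => if h : i = m then (x.det.domDomCongr (finCongr h.symm)) else 0)

lemma Dz_ιMulti {m : ℕ} (x : Module.Basis (Fin m) ℝ M) (v : Fin m → M) :
    Dz x (ιMulti ℝ m v) = x.det v := by
  rw [Dz, ExteriorAlgebra.liftAlternating_apply_ιMulti, dif_pos rfl]
  simp [AlternatingMap.domDomCongr_apply]

lemma Dz_wedgeL {m : ℕ} (x : Module.Basis (Fin m) ℝ M) : Dz x (wedgeL ⇑x) = 1 := by
  rw [wedgeL_eq, Dz_ιMulti, Module.Basis.det_self]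



open Finset

set_option linter.unusedSectionVars false

/-- counting: the number of injective tuples with prescribed image `B` (of card `p`) is `p!`. -/
lemma card_inj_image {m p : ℕ} (B : Finset (Fin m)) (hB : B.card = p) :
    (Finset.univ.filter (fun h : Fin p → Fin m =>
      Function.Injective h ∧ Finset.image h Finset.univ = B)).card = p.factorial := by
  classical
  rw [← Fintype.card_subtype]
  have e : {h : Fin p → Fin m // Function.Injective h ∧ Finset.image h Finset.univ = B} ≃
      (Fin p ↪ {x // x ∈ B}) := by
    refine
      { toFun := fun h => ⟨fun i => ⟨h.1 i, ?_⟩, fun i j hij => h.2.1 (Subtype.ext_iff.mp hij)⟩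
        invFun := fun f => ⟨fun i => (f i).1, ?_, ?_⟩
        left_inv := fun h => by ext i; rfl
        right_inv := fun f => by ext i; rfl }
    · have hmem : h.1 i ∈ Finset.image h.1 Finset.univ :=
        Finset.mem_image_of_mem _ (Finset.mem_univ i)
      rwa [h.2.2] at hmem
    · intro i j hij
      exact f.injective (Subtype.ext hij)
    · apply Finset.eq_of_subset_of_card_le
      · intro x hx
        simp only [Finset.mem_image] at hx
        obtain ⟨i, _, rfl⟩ := hx
        exact (f i).2
      · rw [hB, Finset.card_image_of_injective _ (fun i j hij => f.injective (Subtype.ext hij))]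
        simp
  rw [Fintype.card_congr e, Fintype.card_embedding_eq, Fintype.card_coe, hB,
    Fintype.card_fin, Nat.descFactorial_self]

lemma strictMono_image_card {m p : ℕ} {σ : Fin p → Fin m} (hσ : StrictMono σ) :
    (Finset.image σ Finset.univ).card = p := by
  rw [Finset.card_image_of_injective _ hσ.injective, Finset.card_univ, Fintype.card_fin]

lemma strictMono_eq_of_image_eq {m p : ℕ} {σ σ' : Fin p → Fin m} (hσ : StrictMono σ)
    (hσ' : StrictMono σ') (h : Finset.image σ Finset.univ = Finset.image σ' Finset.univ) :
    σ = σ' := by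
  have h1 : σ = ⇑((Finset.image σ Finset.univ).orderEmbOfFin (strictMono_image_card hσ)) :=
    Finset.orderEmbOfFin_unique _ (fun x => Finset.mem_image_of_mem _ (Finset.mem_univ x)) hσ
  have h2 : σ' = ⇑((Finset.image σ Finset.univ).orderEmbOfFin (strictMono_image_card hσ)) := by
    refine Finset.orderEmbOfFin_unique _ (fun x => ?_) hσ'
    rw [h]; exact Finset.mem_image_of_mem _ (Finset.mem_univ x)
  rw [h1, h2]

/-- The monotone enumeration of the complement of the image of a strictly monotone map. -/
def compMono {m k : ℕ} (hk : k ≤ m) (σ : Fin k → Fin m) (hσ : StrictMono σ) :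
    Fin (m - k) → Fin m :=
  ((Finset.image σ Finset.univ)ᶜ).orderEmbOfFin
    (by rw [Finset.card_compl, strictMono_image_card hσ, Fintype.card_fin])

lemma compMono_strictMono {m k : ℕ} (hk : k ≤ m) (σ : Fin k → Fin m) (hσ : StrictMono σ) :
    StrictMono (compMono hk σ hσ) :=
  (Finset.orderEmbOfFin _ _).strictMono

lemma compMono_image {m k : ℕ} (hk : k ≤ m) (σ : Fin k → Fin m) (hσ : StrictMono σ) :
    Finset.image (compMono hk σ hσ) Finset.univ = (Finset.image σ Finset.univ)ᶜ := by
  apply Finset.coe_injective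
  rw [Finset.coe_image, Finset.coe_univ, Set.image_univ]
  exact Finset.range_orderEmbOfFin _ _

lemma compMono_surj {m k : ℕ} (hk : k ≤ m) (τ : Fin (m - k) → Fin m) (hτ : StrictMono τ) :
    ∃ (σ : Fin k → Fin m) (hσ : StrictMono σ), compMono hk σ hσ = τ := by
  have hcard : ((Finset.image τ Finset.univ)ᶜ).card = k := by
    rw [Finset.card_compl, strictMono_image_card hτ, Fintype.card_fin]
    omega
  refine ⟨((Finset.image τ Finset.univ)ᶜ).orderEmbOfFin hcard,
    (Finset.orderEmbOfFin _ _).strictMono, ?_⟩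
  apply strictMono_eq_of_image_eq (compMono_strictMono _ _ _) hτ
  rw [compMono_image]
  have : Finset.image (⇑(((Finset.image τ Finset.univ)ᶜ).orderEmbOfFin hcard)) Finset.univ =
      (Finset.image τ Finset.univ)ᶜ := by
    apply Finset.coe_injective
    rw [Finset.coe_image, Finset.coe_univ, Set.image_univ]
    exact Finset.range_orderEmbOfFin _ _
  rw [this, compl_compl]

open Finset

lemma permMatrix_apply {p : ℕ} (τ : Equiv.Perm (Fin p)) (i j : Fin p) :
    Equiv.Perm.permMatrix ℝ τ i j = if τ i = j then 1 else 0 := by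
  simp only [Equiv.Perm.permMatrix, PEquiv.toMatrix_apply, Equiv.toPEquiv_apply,
    Option.mem_def, Option.some.injEq]

variable {m : ℕ} (s : ℕ)

/-- the signature signs -/
def eps (a : Fin m) : ℝ := if (a : ℕ) < s then -1 else 1

lemma eps_sq (a : Fin m) : eps s a * eps s a = 1 := by
  unfold eps; split <;> norm_num

/-- entries of the Gram pairing of basis vectors -/
def qf (a b : Fin m) : ℝ := if a = b then eps s a else 0

/-- Gram determinant of two tuples -/
def Dq {p : ℕ} (f h : Fin p → Fin m) : ℝ :=
  Matrix.det (Matrix.of fun i j => qf s (f i) (h j))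

lemma Dq_sq_eq {p : ℕ} {f : Fin p → Fin m} (hf : Function.Injective f) (h : Fin p → Fin m) :
    Dq s f h * Dq s f h =
      if (Function.Injective h ∧ Finset.image h Finset.univ = Finset.image f Finset.univ)
      then 1 else 0 := by
  classical
  by_cases hinj : Function.Injective h
  · by_cases himg : Finset.image h Finset.univ = Finset.image f Finset.univ
    · rw [if_pos ⟨hinj, himg⟩]
      have hset : Set.range h = Set.range f := by
        have h1 : Set.range h = ↑(Finset.image h Finset.univ) := by
          rw [Finset.coe_image, Finset.coe_univ, Set.image_univ]
        have h2 : Set.range f = ↑(Finset.image f Finset.univ) := by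
          rw [Finset.coe_image, Finset.coe_univ, Set.image_univ]
        rw [h1, h2, himg]
      set π : Equiv.Perm (Fin p) :=
        (Equiv.ofInjective h hinj).trans ((Equiv.setCongr hset).trans
          (Equiv.ofInjective f hf).symm) with hπ
      have hfπ : ∀ j, f (π j) = h j := by
        intro j
        have := Equiv.apply_ofInjective_symm hf
          ((Equiv.setCongr hset) ((Equiv.ofInjective h hinj) j))
        simpa [hπ] using this
      have hM : (Matrix.of fun i j => qf s (f i) (h j)) =
          Matrix.diagonal (fun i => eps s (f i)) * Equiv.Perm.permMatrix ℝ π⁻¹ := by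
        ext i j
        rw [Matrix.diagonal_mul, permMatrix_apply]
        simp only [Matrix.of_apply, qf]
        by_cases hij : f i = h j
        · have : π⁻¹ i = j := by
            apply π.injective
            rw [Equiv.Perm.inv_def, Equiv.apply_symm_apply]
            exact hf (by rw [hfπ j, hij])
          simp [hij, this]
        · have : ¬ (π⁻¹ i = j) := by
            intro hc
            apply hij
            rw [← hc, ← hfπ (π⁻¹ i), Equiv.Perm.inv_def, Equiv.apply_symm_apply]
          simp [hij, show ¬π.symm i = j by rwa [Equiv.Perm.inv_def] at this]
      rw [Dq, hM, Matrix.det_mul, Matrix.det_diagonal, Matrix.det_permutation]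
      rw [mul_mul_mul_comm, ← Finset.prod_mul_distrib]
      have h1 : ∀ i ∈ Finset.univ (α := Fin p), eps s (f i) * eps s (f i) = 1 :=
        fun i _ => eps_sq s (f i)
      rw [Finset.prod_congr rfl h1, Finset.prod_const_one, one_mul,
        ← Int.cast_mul, ← Units.val_mul]
      simp [Int.units_mul_self]
    · rw [if_neg (by tauto)]
      have : ∃ j, h j ∉ Finset.image f Finset.univ := by
        by_contra hc
        push_neg at hc
        apply himg
        apply Finset.eq_of_subset_of_card_le
        · intro x hx
          simp only [Finset.mem_image] at hx
          obtain ⟨j, _, rfl⟩ := hx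
          exact hc j
        · rw [Finset.card_image_of_injective _ hf, Finset.card_image_of_injective _ hinj]
      obtain ⟨j, hj⟩ := this
      have hz : Dq s f h = 0 := by
        apply Matrix.det_eq_zero_of_column_eq_zero j
        intro i
        simp only [Matrix.of_apply, qf]
        rw [if_neg]
        intro hc
        exact hj (hc ▸ Finset.mem_image_of_mem _ (Finset.mem_univ i))
      rw [hz, mul_zero]
  · rw [if_neg (by tauto)]
    rw [Function.not_injective_iff] at hinj
    obtain ⟨a, b, hab, hne⟩ := hinj
    have hz : Dq s f h = 0 :=
      Matrix.det_zero_of_column_eq hne (fun i => by simp [Matrix.of_apply, hab])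
    rw [hz, mul_zero]

lemma Dq_char {p : ℕ} {f h : Fin p → Fin m} (hf : Function.Injective f)
    (hne : Dq s f h ≠ 0) :
    Function.Injective h ∧ Finset.image h Finset.univ = Finset.image f Finset.univ := by
  by_contra hc
  have := Dq_sq_eq s hf h
  rw [if_neg hc] at this
  exact hne (by nlinarith [this])

/-- identity (E'): the Gram-pairing sum over all tuples -/
lemma sum_Dq {p : ℕ} {σ σ' : Fin p → Fin m} (hσ : StrictMono σ) (hσ' : StrictMono σ') :
    ∑ h : Fin p → Fin m, Dq s σ h * Dq s σ' h =
      if σ = σ' then (p.factorial : ℝ) else 0 := by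
  classical
  by_cases heq : σ = σ'
  · subst heq
    rw [if_pos rfl]
    have : ∀ h : Fin p → Fin m, Dq s σ h * Dq s σ h =
        if (Function.Injective h ∧ Finset.image h Finset.univ = Finset.image σ Finset.univ)
        then 1 else 0 := fun h => Dq_sq_eq s hσ.injective h
    rw [Finset.sum_congr rfl (fun h _ => this h), Finset.sum_boole]
    rw [card_inj_image _ (strictMono_image_card hσ)]
  · rw [if_neg heq]
    apply Finset.sum_eq_zero
    intro h _
    by_cases h1 : Dq s σ h = 0
    · rw [h1, zero_mul]
    by_cases h2 : Dq s σ' h = 0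
    · rw [h2, mul_zero]
    exfalso
    obtain ⟨_, e1⟩ := Dq_char s hσ.injective h1
    obtain ⟨_, e2⟩ := Dq_char s hσ'.injective h2
    exact heq (strictMono_eq_of_image_eq hσ hσ' (e1 ▸ e2))


section JmSec
variable {m k n : ℕ} (hkn : k + n = m)

/-- the combined index map `Fin m → Fin m` from a `k`-tuple and an `n`-tuple -/
def Jm (f : Fin k → Fin m) (h : Fin n → Fin m) : Fin m → Fin m :=
  Fin.append f h ∘ Fin.cast hkn.symm

lemma Jm_left (f : Fin k → Fin m) (h : Fin n → Fin m) (i : Fin k) :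
    Jm hkn f h (Fin.cast hkn (Fin.castAdd n i)) = f i := by
  unfold Jm Function.comp
  exact Fin.append_left f h i

lemma Jm_right (f : Fin k → Fin m) (h : Fin n → Fin m) (j : Fin n) :
    Jm hkn f h (Fin.cast hkn (Fin.natAdd k j)) = h j := by
  unfold Jm Function.comp
  exact Fin.append_right f h j

lemma Jm_bij {f : Fin k → Fin m} (hf : Function.Injective f) {h : Fin n → Fin m}
    (hh : Function.Injective h)
    (himg : Finset.image h Finset.univ = (Finset.image f Finset.univ)ᶜ) :
    Function.Bijective (Jm hkn f h) := by
  rw [← Finite.surjective_iff_bijective]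
  intro b
  by_cases hb : b ∈ Finset.image f Finset.univ
  · obtain ⟨i, _, rfl⟩ := Finset.mem_image.mp hb
    exact ⟨Fin.cast hkn (Fin.castAdd n i), Jm_left hkn f h i⟩
  · have : b ∈ Finset.image h Finset.univ := by rw [himg]; simpa using hb
    obtain ⟨j, _, rfl⟩ := Finset.mem_image.mp this
    exact ⟨Fin.cast hkn (Fin.natAdd k j), Jm_right hkn f h j⟩

lemma cJ_Jm_sq {f : Fin k → Fin m} (hf : Function.Injective f) (h : Fin n → Fin m) :
    cJ m (Jm hkn f h) * cJ m (Jm hkn f h) =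
      if (Function.Injective h ∧ Finset.image h Finset.univ = (Finset.image f Finset.univ)ᶜ)
      then 1 else 0 := by
  classical
  by_cases hinj : Function.Injective h
  · by_cases himg : Finset.image h Finset.univ = (Finset.image f Finset.univ)ᶜ
    · rw [if_pos ⟨hinj, himg⟩]
      exact cJ_sq (Jm_bij hkn hf hinj himg)
    · rw [if_neg (by tauto)]
      have hsub : ¬ (Finset.image h Finset.univ ⊆ (Finset.image f Finset.univ)ᶜ) := by
        intro hc
        apply himg
        apply Finset.eq_of_subset_of_card_le hc
        rw [Finset.card_compl, Finset.card_image_of_injective _ hf,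
          Finset.card_image_of_injective _ hinj, Fintype.card_fin]
        simp only [Finset.card_univ, Fintype.card_fin]
        omega
      rw [Finset.not_subset] at hsub
      obtain ⟨b, hb1, hb2⟩ := hsub
      rw [Finset.mem_compl, not_not] at hb2
      obtain ⟨j0, _, hj0⟩ := Finset.mem_image.mp hb1
      obtain ⟨i0, _, hi0⟩ := Finset.mem_image.mp hb2
      have hz : cJ m (Jm hkn f h) = 0 := by
        apply Matrix.det_zero_of_column_eq
          (i := Fin.cast hkn (Fin.castAdd n i0)) (j := Fin.cast hkn (Fin.natAdd k j0))
        · intro hc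
          have := congrArg Fin.val hc
          simp only [Fin.coe_cast, Fin.coe_castAdd, Fin.coe_natAdd] at this
          omega
        · intro i
          simp only [Matrix.of_apply, Jm_left, Jm_right, hi0, hj0]
      rw [hz, mul_zero]
  · rw [if_neg (by tauto)]
    rw [Function.not_injective_iff] at hinj
    obtain ⟨a, b, hab, hne⟩ := hinj
    have hz : cJ m (Jm hkn f h) = 0 := by
      apply Matrix.det_zero_of_column_eq
        (i := Fin.cast hkn (Fin.natAdd k a)) (j := Fin.cast hkn (Fin.natAdd k b))
      · intro hc
        have := congrArg Fin.val hc
        simp only [Fin.coe_cast, Fin.coe_natAdd] at this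
        exact hne (Fin.ext (by omega))
      · intro i
        simp only [Matrix.of_apply, Jm_right, hab]
    rw [hz, mul_zero]

lemma cJ_Jm_char {f : Fin k → Fin m} (hf : Function.Injective f) {h : Fin n → Fin m}
    (hne : cJ m (Jm hkn f h) ≠ 0) :
    Function.Injective h ∧ Finset.image h Finset.univ = (Finset.image f Finset.univ)ᶜ := by
  by_contra hc
  have := cJ_Jm_sq hkn hf h
  rw [if_neg hc] at this
  exact hne (by nlinarith [this])

/-- identity (F'): the wedge-pairing sum over all complementary tuples -/
lemma sum_cJ {σ σ' : Fin k → Fin m} (hσ : StrictMono σ) (hσ' : StrictMono σ') :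
    ∑ h : Fin n → Fin m, cJ m (Jm hkn σ h) * cJ m (Jm hkn σ' h) =
      if σ = σ' then (n.factorial : ℝ) else 0 := by
  classical
  by_cases heq : σ = σ'
  · subst heq
    rw [if_pos rfl]
    rw [Finset.sum_congr rfl (fun h _ => cJ_Jm_sq hkn hσ.injective h), Finset.sum_boole]
    rw [card_inj_image _ (by
      rw [Finset.card_compl, strictMono_image_card hσ, Fintype.card_fin]; omega)]
  · rw [if_neg heq]
    apply Finset.sum_eq_zero
    intro h _
    by_cases h1 : cJ m (Jm hkn σ h) = 0
    · rw [h1, zero_mul]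
    by_cases h2 : cJ m (Jm hkn σ' h) = 0
    · rw [h2, mul_zero]
    exfalso
    obtain ⟨_, e1⟩ := cJ_Jm_char hkn hσ.injective h1
    obtain ⟨_, e2⟩ := cJ_Jm_char hkn hσ'.injective h2
    apply heq
    apply strictMono_eq_of_image_eq hσ hσ'
    have := e1 ▸ e2
    have := congrArg compl this
    rwa [compl_compl, compl_compl] at this

end JmSec

lemma cJ_Jm_compMono {m k : ℕ} (hkn : k + (m - k) = m) (hk : k ≤ m)
    {σ : Fin k → Fin m} (hσ : StrictMono σ)
    {τ : Fin (m - k) → Fin m} (hτ : StrictMono τ) :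
    cJ m (Jm hkn σ τ) ≠ 0 ↔ τ = compMono hk σ hσ := by
  constructor
  · intro hne
    obtain ⟨_, himg⟩ := cJ_Jm_char hkn hσ.injective hne
    exact strictMono_eq_of_image_eq hτ (compMono_strictMono hk σ hσ)
      (by rw [compMono_image, ← himg])
  · rintro rfl
    exact cJ_ne_zero (Jm_bij hkn hσ.injective (compMono_strictMono hk σ hσ).injective
      (compMono_image hk σ hσ))


section Alg
variable {U : Type} [AddCommGroup U] [Module ℝ U] {m : ℕ} (u : Module.Basis (Fin m) ℝ U)

/-- the standard basis of `ℝ^m` -/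
abbrev ebb (m : ℕ) : Module.Basis (Fin m) ℝ (Fin m → ℝ) := Pi.basisFun ℝ (Fin m)

/-- basic decomposable elements of `Omega` -/
def Bk (p : ℕ) (f f' : Fin p → Fin m) : Omega U m :=
  wedgeL (⇑u ∘ f) ⊗ₜ[ℝ] wedgeL (⇑(ebb m) ∘ f')

lemma vol_eq : vol (fun a => u a) = wedgeL ⇑u ⊗ₜ[ℝ] wedgeL ⇑(ebb m) := by
  have h2 : (fun a : Fin m => Pi.single a (1 : ℝ)) = ⇑(ebb m) :=
    funext fun a => (Pi.basisFun_apply ℝ (Fin m) a).symm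
  rw [vol, h2]

lemma solder_eq : solder (fun a => u a) = ∑ a, ι ℝ (u a) ⊗ₜ[ℝ] ι ℝ (ebb m a) := by
  unfold solder
  refine Finset.sum_congr rfl (fun a _ => ?_)
  congr 1
  exact congrArg _ (Pi.basisFun_apply ℝ (Fin m) a).symm

lemma wedgeL_nil {M : Type} [AddCommGroup M] [Module ℝ M] (v : Fin 0 → M) :
    wedgeL v = 1 := by
  unfold wedgeL
  simp

lemma solder_pow (p : ℕ) :
    (solder (fun a => u a)) ^ p = ∑ f : Fin p → Fin m, Bk u p f f := by
  induction p with
  | zero =>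
    rw [pow_zero]
    have : ∀ f : Fin 0 → Fin m, Bk u 0 f f = 1 := by
      intro f
      rw [Bk, wedgeL_nil, wedgeL_nil, Algebra.TensorProduct.one_def]
    rw [Finset.sum_congr rfl (fun f _ => this f), Finset.sum_const, Finset.card_univ,
      Fintype.card_fun]
    simp
  | succ p ih =>
    rw [pow_succ', ih, solder_eq, Finset.sum_mul_sum]
    have hterm : ∀ (a : Fin m) (f : Fin p → Fin m),
        (ι ℝ (u a) ⊗ₜ[ℝ] ι ℝ (ebb m a)) * Bk u p f f =
          Bk u (p + 1) (Fin.cons a f) (Fin.cons a f) := by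
      intro a f
      rw [Bk, Bk, Algebra.TensorProduct.tmul_mul_tmul, cons_eq, cons_eq,
        ← Fin.comp_cons, ← Fin.comp_cons]
    rw [Finset.sum_congr rfl (fun a _ => Finset.sum_congr rfl (fun f _ => hterm a f))]
    conv_rhs => rw [← Equiv.sum_comp (Fin.consEquiv fun _ => Fin m)
      (fun h => Bk u (p + 1) h h)]
    rw [Fintype.sum_prod_type]
    rfl

lemma Bk_mul {k n : ℕ} (hkn : k + n = m) (f f' : Fin k → Fin m) (h h' : Fin n → Fin m) :
    Bk u k f f' * Bk u n h h' =
      (cJ m (Jm hkn f h) * cJ m (Jm hkn f' h')) • vol (fun a => u a) := by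
  rw [Bk, Bk, Algebra.TensorProduct.tmul_mul_tmul, vol_eq]
  have hu : wedgeL (⇑u ∘ f) * wedgeL (⇑u ∘ h) = cJ m (Jm hkn f h) • wedgeL ⇑u := by
    rw [wedgeL_mul, ← comp_append]
    have := (wedgeL_cast hkn.symm (⇑u ∘ Fin.append f h)).symm
    rw [this]
    exact wedgeL_comp_basis u (Jm hkn f h)
  have he : wedgeL (⇑(ebb m) ∘ f') * wedgeL (⇑(ebb m) ∘ h') =
      cJ m (Jm hkn f' h') • wedgeL ⇑(ebb m) := by
    rw [wedgeL_mul, ← comp_append]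
    have := (wedgeL_cast hkn.symm (⇑(ebb m) ∘ Fin.append f' h')).symm
    rw [this]
    exact wedgeL_comp_basis (ebb m) (Jm hkn f' h')
  rw [hu, he, TensorProduct.tmul_smul, TensorProduct.smul_tmul', smul_smul, mul_comm,
    ← TensorProduct.smul_tmul']

lemma wedgeL_mem {M : Type} [AddCommGroup M] [Module ℝ M] {p : ℕ} (v : Fin p → M) :
    wedgeL v ∈ ⋀[ℝ]^p M := by
  rw [wedgeL_eq]
  exact ExteriorAlgebra.ιMulti_range ℝ p (Set.mem_range_self v)

lemma Bk_mem (p : ℕ) (f f' : Fin p → Fin m) : Bk u p f f' ∈ bideg U m p p :=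
  Submodule.apply_mem_map₂ _ (wedgeL_mem _) (wedgeL_mem _)

lemma pow_mem (p : ℕ) : (solder (fun a => u a)) ^ p ∈ bideg U m p p := by
  rw [solder_pow]
  exact Submodule.sum_mem _ (fun f _ => Bk_mem u p f f)

lemma wedge_span {M : Type} [AddCommGroup M] [Module ℝ M] (x : Module.Basis (Fin m) ℝ M) (p : ℕ) :
    (⋀[ℝ]^p M : Submodule ℝ _) ≤
      Submodule.span ℝ (Set.range fun h : Fin p → Fin m => wedgeL (⇑x ∘ h)) := by
  rw [← ExteriorAlgebra.ιMulti_span_fixedDegree]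
  apply Submodule.span_le.mpr
  rintro _ ⟨v, rfl⟩
  have hrepr : v = fun i => ∑ a, x.repr (v i) a • x a :=
    funext fun i => (Module.Basis.sum_repr x (v i)).symm
  have hv : (ιMulti ℝ p (M := M)).toMultilinearMap v =
      ∑ r : Fin p → Fin m, (∏ i, x.repr (v i) (r i)) •
        (ιMulti ℝ p (M := M)).toMultilinearMap (fun i => x (r i)) := by
    conv_lhs => rw [hrepr]
    rw [MultilinearMap.map_sum]
    exact Finset.sum_congr rfl fun r _ =>
      MultilinearMap.map_smul_univ _ (fun i => x.repr (v i) (r i)) (fun i => x (r i))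
  rw [SetLike.mem_coe]
  show (ιMulti ℝ p (M := M)).toMultilinearMap v ∈ _
  rw [hv]
  apply Submodule.sum_mem
  intro r _
  apply Submodule.smul_mem
  apply Submodule.subset_span
  refine ⟨r, ?_⟩
  show wedgeL (⇑x ∘ r) = _
  rw [wedgeL_eq]
  rfl

lemma bideg_span (p : ℕ) :
    bideg U m p p ≤ Submodule.span ℝ
      (Set.range fun gh : (Fin p → Fin m) × (Fin p → Fin m) => Bk u p gh.1 gh.2) := by
  rw [bideg]
  rw [Submodule.map₂_le]
  intro a ha b hb
  have ha' := wedge_span u p ha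
  have hb' := wedge_span (ebb m) p hb
  have : (TensorProduct.mk ℝ _ _) a b ∈ Submodule.map₂ (TensorProduct.mk ℝ _ _)
      (Submodule.span ℝ (Set.range fun h : Fin p → Fin m => wedgeL (⇑u ∘ h)))
      (Submodule.span ℝ (Set.range fun h : Fin p → Fin m => wedgeL (⇑(ebb m) ∘ h))) :=
    Submodule.apply_mem_map₂ _ ha' hb'
  rw [Submodule.map₂_span_span] at this
  refine Submodule.span_le.mpr ?_ this
  rintro _ ⟨_, ⟨h1, rfl⟩, _, ⟨h2, rfl⟩, rfl⟩
  exact Submodule.subset_span ⟨(h1, h2), rfl⟩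

lemma bideg_span_mono (p : ℕ) :
    bideg U m p p ≤ Submodule.span ℝ
      (Set.range fun gh : {σ : Fin p → Fin m // StrictMono σ} ×
          {σ : Fin p → Fin m // StrictMono σ} => Bk u p gh.1.1 gh.2.1) := by
  refine le_trans (bideg_span u p) (Submodule.span_le.mpr ?_)
  rintro _ ⟨⟨h, h'⟩, rfl⟩
  simp only
  by_cases hinj : Function.Injective h
  · by_cases hinj' : Function.Injective h'
    · set π := Tuple.sort h with hπ
      set π' := Tuple.sort h' with hπ'
      have hσ : StrictMono (h ∘ π) :=
        (Tuple.monotone_sort h).strictMono_of_injective (hinj.comp π.injective)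
      have hσ' : StrictMono (h' ∘ π') :=
        (Tuple.monotone_sort h').strictMono_of_injective (hinj'.comp π'.injective)
      have e1 : ⇑u ∘ h = (⇑u ∘ (h ∘ π)) ∘ ⇑π⁻¹ := by
        funext i; simp [Function.comp, Equiv.Perm.inv_def]
      have e2 : ⇑(ebb m) ∘ h' = (⇑(ebb m) ∘ (h' ∘ π')) ∘ ⇑π'⁻¹ := by
        funext i; simp [Function.comp, Equiv.Perm.inv_def]
      rw [Bk, e1, e2, wedgeL_perm, wedgeL_perm, TensorProduct.tmul_smul,
        TensorProduct.smul_tmul', smul_smul, ← TensorProduct.smul_tmul']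
      exact Submodule.smul_mem _ _
        (Submodule.subset_span ⟨(⟨h ∘ π, hσ⟩, ⟨h' ∘ π', hσ'⟩), rfl⟩)
    · have : wedgeL (⇑(ebb m) ∘ h') = 0 :=
        wedgeL_not_inj (fun hc => hinj' (Function.Injective.of_comp hc))
      rw [Bk, this, TensorProduct.tmul_zero]
      exact Submodule.zero_mem _
  · have : wedgeL (⇑u ∘ h) = 0 :=
      wedgeL_not_inj (fun hc => hinj (Function.Injective.of_comp hc))
    rw [Bk, this, TensorProduct.zero_tmul]
    exact Submodule.zero_mem _

/-- the "coefficient of the volume element" functional -/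
def Tf : Omega U m →ₗ[ℝ] ℝ :=
  (TensorProduct.lid ℝ ℝ).toLinearMap.comp (TensorProduct.map (Dz u) (Dz (ebb m)))

lemma Tf_tmul (x : ExteriorAlgebra ℝ U) (y : ExteriorAlgebra ℝ (Fin m → ℝ)) :
    Tf u (x ⊗ₜ[ℝ] y) = Dz u x * Dz (ebb m) y := by
  simp [Tf, TensorProduct.map_tmul, TensorProduct.lid_tmul, smul_eq_mul, mul_comm]

lemma Tf_vol : Tf u (vol (fun a => u a)) = 1 := by
  rw [vol_eq, Tf_tmul, Dz_wedgeL, Dz_wedgeL, one_mul]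

end Alg

end Stmt7Aux

open Stmt7Aux

/-- Composite Hodge dual of the `k`-th power of the solder form:
`⋆̄(θ^k) = (k!/(m−k)!) θ^{m−k}`. -/
theorem stmt_7 (m r s k : ℕ) (hm : r + s = m) (hk : k ≤ m)
    (U : Type) [AddCommGroup U] [Module ℝ U]
    (η : (Fin m → ℝ) →ₗ[ℝ] (Fin m → ℝ) →ₗ[ℝ] ℝ)
    (hη : ∀ v w, η v w = ∑ a : Fin _, (if (a : ℕ) < s then (-1 : ℝ) else 1) * v a * w a)
    (g : U →ₗ[ℝ] U →ₗ[ℝ] ℝ) (u : Module.Basis (Fin m) ℝ U)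
    (hg : ∀ a b, g (u a) (u b) = if a = b then (if (a : ℕ) < s then (-1 : ℝ) else 1) else 0)
    (P : Omega U m →ₗ[ℝ] Omega U m →ₗ[ℝ] ℝ)
    (hP : ∀ (k h : ℕ) (φ ψ : Fin k → U) (v w : Fin h → (Fin m → ℝ)),
      P (wedgeL φ ⊗ₜ[ℝ] wedgeL v) (wedgeL ψ ⊗ₜ[ℝ] wedgeL w) =
        Matrix.det (Matrix.of fun i j => g (φ i) (ψ j)) *
        Matrix.det (Matrix.of fun i j => η (v i) (w j)))
    (S : Module.End ℝ (Omega U m))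
    (hS_mem : ∀ x ∈ bideg U m k k, S x ∈ bideg U m (m - k) (m - k))
    (hS : ∀ Φ Ψ, Φ ∈ bideg U m k k → Ψ ∈ bideg U m k k →
      Φ * S Ψ = P Φ Ψ • vol (fun a => u a)) :
    S ((solder (fun a => u a)) ^ k) =
      ((Nat.factorial k : ℝ) / (Nat.factorial (m - k) : ℝ)) •
        (solder (fun a => u a)) ^ (m - k) := by
  classical
  have hkn : k + (m - k) = m := by omega
  set c : ℝ := (Nat.factorial k : ℝ) / (Nat.factorial (m - k) : ℝ) with hc
  -- Gram entries
  have hg1 : ∀ a b : Fin m, g (u a) (u b) = qf s a b := by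
    intro a b; rw [hg]; simp [qf, eps]
  have hη1 : ∀ a b : Fin m, η ((ebb m) a) ((ebb m) b) = qf s a b := by
    intro a b
    rw [Pi.basisFun_apply, Pi.basisFun_apply, hη]
    rw [Finset.sum_eq_single a]
    · rw [Pi.single_eq_same, mul_one]
      by_cases hab : a = b
      · subst hab; simp [qf, eps]
      · simp [qf, Pi.single_apply, hab, eps]
    · intro c _ hca
      simp [Pi.single_apply, hca]
    · intro h; exact absurd (Finset.mem_univ a) h
  -- P on basis elements
  have hPB : ∀ (f f' h h' : Fin k → Fin m),
      P (Bk u k f f') (Bk u k h h') = Dq s f h * Dq s f' h' := by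
    intro f f' h h'
    rw [Bk, Bk, hP k k (⇑u ∘ f) (⇑u ∘ h) (⇑(ebb m) ∘ f') (⇑(ebb m) ∘ h')]
    congr 1
    · rw [Dq]
      congr 1
      ext i j
      exact hg1 (f i) (h j)
    · rw [Dq]
      congr 1
      ext i j
      exact hη1 (f' i) (h' j)
  -- first pairing
  have hpair1 : ∀ (σ σ' : Fin k → Fin m), StrictMono σ → StrictMono σ' →
      Bk u k σ σ' * S ((solder (fun a => u a)) ^ k) =
        (if σ = σ' then (k.factorial : ℝ) else 0) • vol (fun a => u a) := by
    intro σ σ' hσ hσ'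
    rw [hS _ _ (Bk_mem u k σ σ') (pow_mem u k)]
    congr 1
    rw [solder_pow, map_sum, Finset.sum_congr rfl (fun h _ => hPB σ σ' h h),
      sum_Dq s hσ hσ']
  -- second pairing
  have hpair2 : ∀ (σ σ' : Fin k → Fin m), StrictMono σ → StrictMono σ' →
      Bk u k σ σ' * (solder (fun a => u a)) ^ (m - k) =
        (if σ = σ' then ((m - k).factorial : ℝ) else 0) • vol (fun a => u a) := by
    intro σ σ' hσ hσ'
    rw [solder_pow u (m - k), Finset.mul_sum,
      Finset.sum_congr rfl (fun h _ => Bk_mul u hkn σ σ' h h), ← Finset.sum_smul,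
      sum_cJ hkn hσ hσ']
  -- the difference pairs to zero
  have hzero : ∀ (σ σ' : Fin k → Fin m), StrictMono σ → StrictMono σ' →
      Bk u k σ σ' * (S ((solder (fun a => u a)) ^ k) -
        c • (solder (fun a => u a)) ^ (m - k)) = 0 := by
    intro σ σ' hσ hσ'
    rw [mul_sub, hpair1 σ σ' hσ hσ', mul_smul_comm, hpair2 σ σ' hσ hσ', smul_smul,
      ← sub_smul]
    have : (if σ = σ' then (k.factorial : ℝ) else 0) -
        c * (if σ = σ' then ((m - k).factorial : ℝ) else 0) = 0 := by
      split
      · rw [hc, div_mul_cancel₀, sub_self]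
        exact Nat.cast_ne_zero.mpr (Nat.factorial_ne_zero _)
      · simp
    rw [this, zero_smul]
  -- X is in bidegree (m-k, m-k)
  have hXmem : S ((solder (fun a => u a)) ^ k) - c • (solder (fun a => u a)) ^ (m - k)
      ∈ bideg U m (m - k) (m - k) :=
    Submodule.sub_mem _ (hS_mem _ (pow_mem u k)) (Submodule.smul_mem _ _ (pow_mem u (m - k)))
  -- expand X in the monotone basis
  obtain ⟨y, hy⟩ := (Submodule.mem_span_range_iff_exists_fun ℝ).mp (bideg_span_mono u (m - k) hXmem)
  -- all coefficients vanish
  have hYzero : ∀ (a b : {σ : Fin (m - k) → Fin m // StrictMono σ}), y (a, b) = 0 := by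
    intro a b
    obtain ⟨σ, hσ, hcσ⟩ := compMono_surj hk a.1 a.2
    obtain ⟨σ', hσ', hcσ'⟩ := compMono_surj hk b.1 b.2
    have h0 := hzero σ σ' hσ hσ'
    rw [← hy, Finset.mul_sum] at h0
    have hterm : ∀ gh : {σ : Fin (m - k) → Fin m // StrictMono σ} ×
        {σ : Fin (m - k) → Fin m // StrictMono σ},
        Bk u k σ σ' * (y gh • Bk u (m - k) gh.1.1 gh.2.1) =
          (y gh * (cJ m (Jm hkn σ gh.1.1) * cJ m (Jm hkn σ' gh.2.1))) •
            vol (fun a => u a) := by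
      intro gh
      rw [mul_smul_comm, Bk_mul u hkn, smul_smul]
    rw [Finset.sum_congr rfl (fun gh _ => hterm gh), ← Finset.sum_smul] at h0
    have h1 : ∑ gh : {σ : Fin (m - k) → Fin m // StrictMono σ} ×
        {σ : Fin (m - k) → Fin m // StrictMono σ},
        y gh * (cJ m (Jm hkn σ gh.1.1) * cJ m (Jm hkn σ' gh.2.1)) = 0 := by
      have h2 := congrArg (Tf u) h0
      rw [map_smul, Tf_vol, map_zero, smul_eq_mul, mul_one] at h2
      exact h2
    rw [Finset.sum_eq_single (a, b)] at h1
    · have hc1 : cJ m (Jm hkn σ a.1) ≠ 0 :=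
        (cJ_Jm_compMono hkn hk hσ a.2).mpr hcσ.symm
      have hc2 : cJ m (Jm hkn σ' b.1) ≠ 0 :=
        (cJ_Jm_compMono hkn hk hσ' b.2).mpr hcσ'.symm
      rcases mul_eq_zero.mp h1 with h | h
      · exact h
      · exact absurd h (mul_ne_zero hc1 hc2)
    · intro gh _ hne
      by_cases h1a : gh.1 = a
      · have h2b : gh.2 ≠ b := fun hcb => hne (Prod.ext h1a hcb)
        have hz : cJ m (Jm hkn σ' gh.2.1) = 0 := by
          by_contra hcne
          apply h2b
          apply Subtype.ext
          rw [(cJ_Jm_compMono hkn hk hσ' gh.2.2).mp hcne, hcσ']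
        rw [hz, mul_zero, mul_zero]
      · have hz : cJ m (Jm hkn σ gh.1.1) = 0 := by
          by_contra hcne
          apply h1a
          apply Subtype.ext
          rw [(cJ_Jm_compMono hkn hk hσ gh.1.2).mp hcne, hcσ]
        rw [hz, zero_mul, mul_zero]
    · intro hnm; exact absurd (Finset.mem_univ _) hnm
  have hX : S ((solder (fun a => u a)) ^ k) - c • (solder (fun a => u a)) ^ (m - k) = 0 := by
    rw [← hy]
    apply Finset.sum_eq_zero
    intro gh _
    rw [show y gh = 0 from (by rw [← hYzero gh.1 gh.2]), zero_smul]
  have := sub_eq_zero.mp hX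
  rw [this]
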